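/- Let X = [0,1]^d, let X_n = {X_1, …, X_n} be n independent random points each uniformly distributed on [0,1]^d, and let U be a further independent uniform random point on [0,1]^d. Let V_d = π^{d/2}/Γ(d/2 + 1) be the volume of the unit Euclidean ball in ℝ^d, and define F_{n,d}(t) = Pr( n^{1/d} V_d^{1/d} · dist(U, X_n) ≤ t ). Then for every t ≥ 0, F_{n,d}(t) → 1 − exp(−t^d) as n → ∞. -/

import Mathlib

open Set MeasureTheory Filter

/-- The unit cube `[0,1]^d` in `ℝ^d`. -/
def unitCube (d : ℕ) : Set (EuclideanSpace ℝ (Fin d)) :=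
  {x | ∀ i, x i ∈ Set.Icc (0 : ℝ) 1}

/-- The uniform distribution on the unit cube `[0,1]^d` (which has Lebesgue volume `1`). -/
noncomputable def unifCube (d : ℕ) : Measure (EuclideanSpace ℝ (Fin d)) :=
  volume.restrict (unitCube d)

/-- Volume `V_d = π^{d/2} / Γ(d/2 + 1)` of the unit Euclidean ball in `ℝ^d`. -/
noncomputable def ballVol (d : ℕ) : ℝ :=
  Real.pi ^ ((d : ℝ) / 2) / Real.Gamma ((d : ℝ) / 2 + 1)

/-- `F_{n,d}(t) = Pr( n^{1/d} V_d^{1/d} · dist(U, X_n) ≤ t )`, where `X_1, …, X_n, U` are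
i.i.d. uniform on `[0,1]^d` (modelled on the canonical product probability space). -/
noncomputable def Fnd (n d : ℕ) (t : ℝ) : ℝ :=
  (((Measure.pi fun _ : Fin n => unifCube d).prod (unifCube d))
    {ω : (Fin n → EuclideanSpace ℝ (Fin d)) × EuclideanSpace ℝ (Fin d) |
      (n : ℝ) ^ ((1 : ℝ) / d) * ballVol d ^ ((1 : ℝ) / d) *
        Metric.infDist ω.2 (Set.range ω.1) ≤ t}).toReal

/-! ### Auxiliary lemmas -/

lemma volume_euclid_pi_Icc (d : ℕ) (a b : ℝ) :
    volume {x : EuclideanSpace ℝ (Fin d) | ∀ i, x i ∈ Icc a b}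
      = ENNReal.ofReal (b - a) ^ d := by
  have h : {x : EuclideanSpace ℝ (Fin d) | ∀ i, x i ∈ Icc a b}
      = (MeasurableEquiv.toLp 2 (Fin d → ℝ)).symm ⁻¹' (Set.pi univ fun _ => Icc a b) := by
    ext x
    constructor
    · intro hx i _; exact hx i
    · intro hx i; exact hx i (mem_univ i)
  rw [h, (EuclideanSpace.volume_preserving_symm_measurableEquiv_toLp (Fin d)).measure_preimage
      (MeasurableSet.univ_pi fun _ => measurableSet_Icc).nullMeasurableSet,
    volume_pi_pi]
  simp [Real.volume_Icc]

lemma volume_unitCube (d : ℕ) : volume (unitCube d) = 1 := by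
  rw [unitCube, volume_euclid_pi_Icc]; simp

instance (d : ℕ) : IsProbabilityMeasure (unifCube d) :=
  ⟨by rw [unifCube, Measure.restrict_apply_univ, volume_unitCube]⟩

lemma ballVol_pos (d : ℕ) : 0 < ballVol d :=
  div_pos (Real.rpow_pos_of_pos Real.pi_pos _) (Real.Gamma_pos_of_pos (by positivity))

lemma volume_closedBall_eq (d : ℕ) (hd : 1 ≤ d) (u : EuclideanSpace ℝ (Fin d)) (r : ℝ)
    (hr : 0 ≤ r) :
    volume (Metric.closedBall u r) = ENNReal.ofReal (ballVol d * r ^ d) := by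
  haveI : Nonempty (Fin d) := ⟨⟨0, hd⟩⟩
  rw [EuclideanSpace.volume_closedBall]
  have hπ : Real.sqrt Real.pi ^ d = Real.pi ^ ((d : ℝ) / 2) := by
    rw [Real.sqrt_eq_rpow, ← Real.rpow_natCast (Real.pi ^ ((1:ℝ)/2)) d,
      ← Real.rpow_mul Real.pi_pos.le]
    ring_nf
  rw [Fintype.card_fin, hπ, ← ENNReal.ofReal_pow hr, ← ENNReal.ofReal_mul (by positivity)]
  rw [ballVol, mul_comm]

/-- The (scaled) radius `s_n = t / (n^{1/d} V_d^{1/d})`. -/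
noncomputable def sn (d : ℕ) (t : ℝ) (n : ℕ) : ℝ :=
  t / ((n : ℝ) ^ ((1 : ℝ) / d) * ballVol d ^ ((1 : ℝ) / d))

lemma sn_nonneg (d : ℕ) (t : ℝ) (ht : 0 ≤ t) (n : ℕ) : 0 ≤ sn d t n :=
  div_nonneg ht (mul_nonneg (Real.rpow_nonneg (Nat.cast_nonneg n) _)
    (Real.rpow_nonneg (ballVol_pos d).le _))

lemma cn_pos (d : ℕ) (n : ℕ) (hn : 1 ≤ n) :
    0 < (n : ℝ) ^ ((1 : ℝ) / d) * ballVol d ^ ((1 : ℝ) / d) :=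
  mul_pos (Real.rpow_pos_of_pos (by exact_mod_cast hn) _)
    (Real.rpow_pos_of_pos (ballVol_pos d) _)

lemma sn_pow (d : ℕ) (hd : 1 ≤ d) (t : ℝ) (ht : 0 ≤ t) (n : ℕ) (hn : 1 ≤ n) :
    ballVol d * sn d t n ^ d = t ^ d / n := by
  have hd0 : (d : ℝ) ≠ 0 := Nat.cast_ne_zero.mpr (by omega)
  have hkey : ∀ x : ℝ, 0 < x → (x ^ ((1 : ℝ) / d)) ^ d = x := by
    intro x hx
    rw [← Real.rpow_natCast (x ^ ((1:ℝ)/d)) d, ← Real.rpow_mul hx.le,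
      one_div, inv_mul_cancel₀ hd0, Real.rpow_one]
  have hn' : (0:ℝ) < n := by exact_mod_cast hn
  rw [sn, div_pow, mul_pow, hkey _ hn', hkey _ (ballVol_pos d)]
  rw [← div_div, mul_comm, div_mul_cancel₀ _ (ballVol_pos d).ne']

lemma sn_tendsto (d : ℕ) (hd : 1 ≤ d) (t : ℝ) :
    Tendsto (sn d t) atTop (nhds 0) := by
  apply Tendsto.div_atTop tendsto_const_nhds
  apply Tendsto.atTop_mul_const (Real.rpow_pos_of_pos (ballVol_pos d) _)
  exact (tendsto_rpow_atTop (by positivity : (0:ℝ) < 1/d)).comp tendsto_natCast_atTop_atTop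

/-- The complementary integral `J_n = ∫ (1 - vol(B(u,s_n) ∩ cube))^n du`. -/
noncomputable def Jn (d : ℕ) (t : ℝ) (n : ℕ) : ENNReal :=
  ∫⁻ u, (1 - unifCube d (Metric.closedBall u (sn d t n))) ^ n ∂(unifCube d)

lemma Fnd_eq (d : ℕ) (t : ℝ) (n : ℕ) (hn : 1 ≤ n) :
    Fnd n d t = (1 - Jn d t n).toReal := by
  set s := sn d t n with hs
  set c := (n : ℝ) ^ ((1 : ℝ) / d) * ballVol d ^ ((1 : ℝ) / d) with hcdef
  have hc : 0 < c := cn_pos d n hn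
  set E : Set ((Fin n → EuclideanSpace ℝ (Fin d)) × EuclideanSpace ℝ (Fin d)) :=
    {ω | c * Metric.infDist ω.2 (Set.range ω.1) ≤ t} with hEdef
  have hE : E = ⋃ j : Fin n, {ω : (Fin n → EuclideanSpace ℝ (Fin d)) × EuclideanSpace ℝ (Fin d) |
      dist ω.2 (ω.1 j) ≤ s} := by
    ext ω
    simp only [hEdef, mem_setOf_eq, mem_iUnion]
    rw [← le_div_iff₀' hc]
    have hsc : t / c = s := rfl
    rw [hsc]
    constructor
    · intro h
      obtain ⟨y, hy, hEq⟩ := ((Set.finite_range ω.1).isCompact).exists_infDist_eq_dist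
        ⟨ω.1 ⟨0, hn⟩, mem_range_self _⟩ ω.2
      obtain ⟨j, rfl⟩ := hy
      exact ⟨j, hEq ▸ h⟩
    · rintro ⟨j, hj⟩
      exact le_trans (Metric.infDist_le_dist_of_mem (mem_range_self j)) hj
  have hEmeas : MeasurableSet E := by
    rw [hE]
    exact MeasurableSet.iUnion fun j => measurableSet_le
      (continuous_snd.dist ((continuous_apply j).comp continuous_fst)).measurable
      measurable_const
  have hFnd : Fnd n d t =
      (((Measure.pi fun _ : Fin n => unifCube d).prod (unifCube d)) E).toReal := rfl
  have hcompl : ((Measure.pi fun _ : Fin n => unifCube d).prod (unifCube d)) Eᶜ = Jn d t n := by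
    rw [Measure.prod_apply_symm hEmeas.compl]
    simp only [Jn, ← hs]
    refine lintegral_congr fun u => ?_
    have hpre : ((fun x => (x, u)) ⁻¹' Eᶜ) =
        Set.pi univ fun _ : Fin n => (Metric.closedBall u s)ᶜ := by
      ext x
      simp only [hE, mem_preimage, mem_compl_iff, mem_iUnion, mem_setOf_eq, not_exists,
        Set.mem_pi, mem_univ, forall_true_left, Metric.mem_closedBall, not_le, dist_comm]
    rw [hpre, Measure.pi_pi, prob_compl_eq_one_sub measurableSet_closedBall,
      Finset.prod_const, Finset.card_univ, Fintype.card_fin]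
  rw [hFnd, ← compl_compl E, prob_compl_eq_one_sub hEmeas.compl, hcompl]

lemma Jn_lower (d : ℕ) (hd : 1 ≤ d) (t : ℝ) (ht : 0 ≤ t) (n : ℕ) (hn : 1 ≤ n)
    (htn : t ^ d ≤ n) :
    ENNReal.ofReal ((1 - t ^ d / n) ^ n) ≤ Jn d t n := by
  have hn' : (0:ℝ) < n := by exact_mod_cast hn
  have h1x : 0 ≤ 1 - t ^ d / n := by
    rw [sub_nonneg, div_le_one hn']; exact htn
  have hball : ∀ u, unifCube d (Metric.closedBall u (sn d t n)) ≤ ENNReal.ofReal (t ^ d / n) := by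
    intro u
    calc unifCube d (Metric.closedBall u (sn d t n))
        ≤ volume (Metric.closedBall u (sn d t n)) := Measure.restrict_apply_le _ _
      _ = ENNReal.ofReal (ballVol d * sn d t n ^ d) :=
          volume_closedBall_eq d hd u _ (sn_nonneg d t ht n)
      _ = ENNReal.ofReal (t ^ d / n) := by rw [sn_pow d hd t ht n hn]
  have key : ∀ u, ENNReal.ofReal (1 - t ^ d / n) ^ n
      ≤ (1 - unifCube d (Metric.closedBall u (sn d t n))) ^ n := by
    intro u
    refine pow_le_pow_left' ?_ n
    rw [ENNReal.ofReal_sub _ (by positivity), ENNReal.ofReal_one]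
    exact tsub_le_tsub_left (hball u) 1
  calc ENNReal.ofReal ((1 - t ^ d / n) ^ n)
      = ENNReal.ofReal (1 - t ^ d / n) ^ n * (unifCube d) univ := by
        rw [measure_univ, mul_one, ENNReal.ofReal_pow h1x]
    _ = ∫⁻ _, ENNReal.ofReal (1 - t ^ d / n) ^ n ∂(unifCube d) := (lintegral_const _).symm
    _ ≤ Jn d t n := lintegral_mono key

lemma Jn_upper (d : ℕ) (hd : 1 ≤ d) (t : ℝ) (ht : 0 ≤ t) (n : ℕ) (hn : 1 ≤ n)
    (htn : t ^ d ≤ n) (hs2 : sn d t n ≤ 1 / 2) :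
    Jn d t n ≤ ENNReal.ofReal (Real.exp (-(t ^ d)))
      + ENNReal.ofReal (1 - (1 - 2 * sn d t n) ^ d) := by
  set s := sn d t n with hsdef
  have hs0 : 0 ≤ s := sn_nonneg d t ht n
  have hn' : (0:ℝ) < n := by exact_mod_cast hn
  have h1x : 0 ≤ 1 - t ^ d / n := by rw [sub_nonneg, div_le_one hn']; exact htn
  set Inner : Set (EuclideanSpace ℝ (Fin d)) := {x | ∀ i, x i ∈ Icc s (1 - s)} with hIdef
  have hImeas : MeasurableSet Inner := by
    have : Inner = ⋂ i, (fun x : EuclideanSpace ℝ (Fin d) => x i) ⁻¹' Icc s (1 - s) := by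
      ext x; simp [hIdef]
    rw [this]
    exact MeasurableSet.iInter fun i =>
      ((EuclideanSpace.proj i : EuclideanSpace ℝ (Fin d) →L[ℝ] ℝ).continuous.measurable
        measurableSet_Icc)
  have hcoord : ∀ (v u : EuclideanSpace ℝ (Fin d)) (i : Fin d), dist (v i) (u i) ≤ dist v u := by
    intro v u i
    rw [EuclideanSpace.dist_eq]
    have h1 : dist (v i) (u i) ^ 2 ≤ ∑ j, dist (v j) (u j) ^ 2 :=
      Finset.single_le_sum (f := fun j => dist (v j) (u j) ^ 2)
        (fun j _ => sq_nonneg _) (Finset.mem_univ i)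
    calc dist (v i) (u i) = Real.sqrt (dist (v i) (u i) ^ 2) := (Real.sqrt_sq dist_nonneg).symm
      _ ≤ _ := Real.sqrt_le_sqrt h1
  have hball_sub : ∀ u ∈ Inner, Metric.closedBall u s ⊆ unitCube d := by
    intro u hu v hv i
    have h1 : dist (v i) (u i) ≤ s := le_trans (hcoord v u i) hv
    have h2 := hu i
    rw [Real.dist_eq, abs_le] at h1
    constructor <;> [linarith [h2.1]; linarith [h2.2]]
  have hGInner : ∀ u ∈ Inner, unifCube d (Metric.closedBall u s) = ENNReal.ofReal (t ^ d / n) := by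
    intro u hu
    rw [unifCube, Measure.restrict_apply measurableSet_closedBall,
      inter_eq_left.mpr (hball_sub u hu), volume_closedBall_eq d hd u s hs0,
      sn_pow d hd t ht n hn]
  have hreal : (1 - t ^ d / n) ^ n ≤ Real.exp (-(t ^ d)) := by
    have h1 : 1 - t ^ d / n ≤ Real.exp (-(t ^ d) / n) := by
      have h := Real.add_one_le_exp (-(t ^ d) / n)
      calc 1 - t ^ d / (n:ℝ) = -(t ^ d) / n + 1 := by ring
        _ ≤ _ := h
    calc (1 - t ^ d / n) ^ n ≤ Real.exp (-(t ^ d) / n) ^ n := pow_le_pow_left₀ h1x h1 n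
      _ = Real.exp (-(t ^ d)) := by
          rw [← Real.exp_nat_mul]
          congr 1
          field_simp
  have hfInner : ∀ u ∈ Inner, (1 - unifCube d (Metric.closedBall u s)) ^ n
      ≤ ENNReal.ofReal (Real.exp (-(t ^ d))) := by
    intro u hu
    rw [hGInner u hu, ← ENNReal.ofReal_one, ← ENNReal.ofReal_sub _ (by positivity),
      ← ENNReal.ofReal_pow h1x]
    exact ENNReal.ofReal_le_ofReal hreal
  have hf_le_one : ∀ u, (1 - unifCube d (Metric.closedBall u s)) ^ n ≤ 1 :=
    fun u => pow_le_one' tsub_le_self n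
  have hInnerVol : unifCube d Inner = ENNReal.ofReal (1 - 2 * s) ^ d := by
    have hsub : Inner ⊆ unitCube d := by
      intro x hx i
      have := hx i
      rw [mem_Icc] at this ⊢
      constructor <;> [linarith [this.1]; linarith [this.2]]
    rw [unifCube, Measure.restrict_apply hImeas, inter_eq_left.mpr hsub]
    have : Inner = {x : EuclideanSpace ℝ (Fin d) | ∀ i, x i ∈ Icc s (1 - s)} := rfl
    rw [this, volume_euclid_pi_Icc, show 1 - s - s = 1 - 2 * s by ring]
  have hcompl : unifCube d Innerᶜ = ENNReal.ofReal (1 - (1 - 2 * s) ^ d) := by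
    rw [prob_compl_eq_one_sub hImeas, hInnerVol,
      ENNReal.ofReal_sub _ (pow_nonneg (by linarith) d), ENNReal.ofReal_one,
      ENNReal.ofReal_pow (by linarith : (0:ℝ) ≤ 1 - 2*s)]
  have hsplit : Jn d t n = (∫⁻ u in Inner, (1 - unifCube d (Metric.closedBall u s)) ^ n
        ∂(unifCube d))
      + ∫⁻ u in Innerᶜ, (1 - unifCube d (Metric.closedBall u s)) ^ n ∂(unifCube d) :=
    (lintegral_add_compl _ hImeas).symm
  rw [hsplit]
  have h1 : (∫⁻ u in Inner, (1 - unifCube d (Metric.closedBall u s)) ^ n ∂(unifCube d))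
      ≤ ENNReal.ofReal (Real.exp (-(t ^ d))) := by
    calc _ ≤ ∫⁻ _ in Inner, ENNReal.ofReal (Real.exp (-(t ^ d))) ∂(unifCube d) :=
          setLIntegral_mono measurable_const hfInner
      _ = ENNReal.ofReal (Real.exp (-(t ^ d))) * unifCube d Inner := by
          rw [setLIntegral_const]
      _ ≤ ENNReal.ofReal (Real.exp (-(t ^ d))) * 1 := mul_le_mul_right prob_le_one _
      _ = _ := mul_one _
  have h2 : (∫⁻ u in Innerᶜ, (1 - unifCube d (Metric.closedBall u s)) ^ n ∂(unifCube d))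
      ≤ ENNReal.ofReal (1 - (1 - 2 * s) ^ d) := by
    calc _ ≤ ∫⁻ _ in Innerᶜ, (1:ENNReal) ∂(unifCube d) :=
          setLIntegral_mono measurable_const (fun u _ => hf_le_one u)
      _ = unifCube d Innerᶜ := by rw [setLIntegral_const, one_mul]
      _ = _ := hcompl
  exact add_le_add h1 h2

/-- For `X_1, …, X_n, U` i.i.d. uniform on `[0,1]^d` and every `t ≥ 0`,
`F_{n,d}(t) = Pr( n^{1/d} V_d^{1/d} dist(U, X_n) ≤ t ) → 1 - exp(-t^d)` as `n → ∞`. -/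
theorem Fnd_tendsto (d : ℕ) (hd : 1 ≤ d) (t : ℝ) (ht : 0 ≤ t) :
    Tendsto (fun n : ℕ => Fnd n d t) atTop (nhds (1 - Real.exp (-(t ^ d)))) := by
  have hslim := sn_tendsto d hd t
  have hev1 : ∀ᶠ n : ℕ in atTop, 1 ≤ n := eventually_ge_atTop 1
  have hev2 : ∀ᶠ n : ℕ in atTop, t ^ d ≤ (n : ℝ) :=
    (tendsto_natCast_atTop_atTop (R := ℝ)).eventually_ge_atTop (t ^ d)
  have hev3 : ∀ᶠ n : ℕ in atTop, sn d t n ≤ 1 / 2 :=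
    hslim.eventually (eventually_le_nhds (by norm_num))
  set r : ℕ → ℝ := fun n => (Jn d t n).toReal with hrdef
  have hJle : ∀ n, Jn d t n ≤ 1 := by
    intro n
    calc Jn d t n ≤ ∫⁻ _, 1 ∂(unifCube d) :=
          lintegral_mono fun u => pow_le_one' tsub_le_self n
      _ = 1 := by rw [lintegral_one, measure_univ]
  have hJne : ∀ n, Jn d t n ≠ ⊤ := fun n => (lt_of_le_of_lt (hJle n) ENNReal.one_lt_top).ne
  have hlow : ∀ᶠ n : ℕ in atTop, (1 + -(t ^ d) / n) ^ n ≤ r n := by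
    filter_upwards [hev1, hev2] with n h1 h2
    have hn' : (0:ℝ) < n := by exact_mod_cast h1
    have h1x : 0 ≤ 1 - t ^ d / n := by rw [sub_nonneg, div_le_one hn']; exact h2
    calc (1 + -(t ^ d) / (n:ℝ)) ^ n = (1 - t ^ d / n) ^ n := by
          rw [show 1 + -(t ^ d) / (n:ℝ) = 1 - t ^ d / n by ring]
      _ = (ENNReal.ofReal ((1 - t ^ d / n) ^ n)).toReal :=
          (ENNReal.toReal_ofReal (pow_nonneg h1x n)).symm
      _ ≤ r n := ENNReal.toReal_mono (hJne n) (Jn_lower d hd t ht n h1 h2)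
  have hup : ∀ᶠ n : ℕ in atTop,
      r n ≤ Real.exp (-(t ^ d)) + (1 - (1 - 2 * sn d t n) ^ d) := by
    filter_upwards [hev1, hev2, hev3] with n h1 h2 h3
    have hs0 := sn_nonneg d t ht n
    have hbnn : 0 ≤ 1 - (1 - 2 * sn d t n) ^ d := by
      have : (1 - 2 * sn d t n) ^ d ≤ 1 := pow_le_one₀ (by linarith) (by linarith)
      linarith
    calc r n ≤ (ENNReal.ofReal (Real.exp (-(t ^ d)))
          + ENNReal.ofReal (1 - (1 - 2 * sn d t n) ^ d)).toReal :=
          ENNReal.toReal_mono (by finiteness) (Jn_upper d hd t ht n h1 h2 h3)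
      _ = Real.exp (-(t ^ d)) + (1 - (1 - 2 * sn d t n) ^ d) := by
          rw [ENNReal.toReal_add ENNReal.ofReal_ne_top ENNReal.ofReal_ne_top,
            ENNReal.toReal_ofReal (Real.exp_nonneg _), ENNReal.toReal_ofReal hbnn]
  have hlimlow : Tendsto (fun n : ℕ => (1 + -(t ^ d) / n) ^ n) atTop
      (nhds (Real.exp (-(t ^ d)))) := Real.tendsto_one_add_div_pow_exp _
  have hlimup : Tendsto (fun n : ℕ => Real.exp (-(t ^ d)) + (1 - (1 - 2 * sn d t n) ^ d))
      atTop (nhds (Real.exp (-(t ^ d)))) := by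
    have h0 : Tendsto (fun n : ℕ => (1 - 2 * sn d t n) ^ d) atTop (nhds ((1 - 2 * 0) ^ d)) :=
      (tendsto_const_nhds.sub (hslim.const_mul 2)).pow d
    have h2 : Tendsto (fun n : ℕ => 1 - (1 - 2 * sn d t n) ^ d) atTop (nhds 0) := by
      have := Tendsto.sub (tendsto_const_nhds : Tendsto (fun _ : ℕ => (1:ℝ)) atTop (nhds 1)) h0
      simpa using this
    simpa using tendsto_const_nhds.add h2
  have hrlim : Tendsto r atTop (nhds (Real.exp (-(t ^ d)))) :=
    tendsto_of_tendsto_of_tendsto_of_le_of_le' hlimlow hlimup hlow hup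
  have hfinal : Tendsto (fun n : ℕ => 1 - r n) atTop (nhds (1 - Real.exp (-(t ^ d)))) :=
    tendsto_const_nhds.sub hrlim
  refine Tendsto.congr' ?_ hfinal
  filter_upwards [hev1] with n h1
  rw [Fnd_eq d t n h1, ENNReal.toReal_sub_of_le (hJle n) ENNReal.one_ne_top, ENNReal.toReal_one]
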